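/- Chain rule for divergence applied to sequential sampling: Let p and p̃ be two distributions of a pair (V^{1:N}, X^{1:N}) with the same marginal p_{X^{1:N}}, where p̃_{V^{1:N}|X^{1:N}} factorizes coordinatewise as p̃ = Π_j p̃_{V^j | V^{1:j−1} X^{1:N}}, and suppose the index set {1,…,N} is partitioned into three sets R, S, T such that: for j ∈ S, p̃_{V^j|V^{1:j−1}X^{1:N}} = p_{V^j|V^{1:j−1}X^{1:N}}; for j ∈ T, p̃_{V^j|V^{1:j−1}X^{1:N}} = p_{V^j|V^{1:j−1}}; for j ∈ R, p̃_{V^j|V^{1:j−1}X^{1:N}} is uniform on {0,1}. If additionally 1 − H_p(V^j|V^{1:j−1}X^{1:N}) ≤ δ for j ∈ R and H_p(V^j|V^{1:j−1}) ≤ δ for j ∈ T, then D(p_{X^{1:N}V^{1:N}} ‖ p̃_{X^{1:N}V^{1:N}}) ≤ N·δ. -/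

import Mathlib

open Finset

noncomputable def distOf {Ω α : Type*} [Fintype Ω] [DecidableEq α] (μ : Ω → ℝ) (f : Ω → α) : α → ℝ :=
  fun x => ∑ ω, if f ω = x then μ ω else 0

noncomputable def ent {α : Type*} [Fintype α] (p : α → ℝ) : ℝ :=
  -∑ a, p a * Real.logb 2 (p a)

noncomputable def Hrv {Ω α : Type*} [Fintype Ω] [Fintype α] [DecidableEq α]
    (μ : Ω → ℝ) (f : Ω → α) : ℝ :=
  ent (distOf μ f)

noncomputable def MIrv {Ω α β : Type*} [Fintype Ω] [Fintype α] [Fintype β]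
    [DecidableEq α] [DecidableEq β] (μ : Ω → ℝ) (f : Ω → α) (g : Ω → β) : ℝ :=
  Hrv μ f + Hrv μ g - Hrv μ (fun ω => (f ω, g ω))

noncomputable def condH {Ω α β : Type*} [Fintype Ω] [Fintype α] [Fintype β]
    [DecidableEq α] [DecidableEq β] (μ : Ω → ℝ) (f : Ω → α) (g : Ω → β) : ℝ :=
  Hrv μ (fun ω => (f ω, g ω)) - Hrv μ g

noncomputable def cMI {Ω α β γ : Type*} [Fintype Ω] [Fintype α] [Fintype β] [Fintype γ]
    [DecidableEq α] [DecidableEq β] [DecidableEq γ]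
    (μ : Ω → ℝ) (f : Ω → α) (g : Ω → β) (h : Ω → γ) : ℝ :=
  Hrv μ (fun ω => (f ω, h ω)) + Hrv μ (fun ω => (g ω, h ω))
    - Hrv μ (fun ω => (f ω, g ω, h ω)) - Hrv μ h

def IsPMF {Ω : Type*} [Fintype Ω] (μ : Ω → ℝ) : Prop := (∀ ω, 0 ≤ μ ω) ∧ ∑ ω, μ ω = 1

noncomputable def TV {α : Type*} [Fintype α] (p q : α → ℝ) : ℝ := (1/2) * ∑ a, |p a - q a|

noncomputable def KL {α : Type*} [Fintype α] (p q : α → ℝ) : ℝ :=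
  ∑ a, p a * Real.logb 2 (p a / q a)

/-- Probability that `V` agrees with `v` strictly before index `j` and `X = x`. -/
noncomputable def prefProb (N : ℕ) (q : (Fin N → ZMod 2) × (Fin N → ZMod 2) → ℝ)
    (j : Fin N) (v x : Fin N → ZMod 2) : ℝ :=
  ∑ w, if ∀ i : Fin N, i < j → w i = v i then q (w, x) else 0

/-- Probability that `V` agrees with `v` up to index `j` (inclusive) and `X = x`. -/
noncomputable def prefProbLe (N : ℕ) (q : (Fin N → ZMod 2) × (Fin N → ZMod 2) → ℝ)
    (j : Fin N) (v x : Fin N → ZMod 2) : ℝ :=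
  ∑ w, if ∀ i : Fin N, i ≤ j → w i = v i then q (w, x) else 0

/-- Conditional probability `q(V^j = v^j | V^{1:j-1} = v^{1:j-1}, X = x)`. -/
noncomputable def condP (N : ℕ) (q : (Fin N → ZMod 2) × (Fin N → ZMod 2) → ℝ)
    (j : Fin N) (v x : Fin N → ZMod 2) : ℝ :=
  prefProbLe N q j v x / prefProb N q j v x

/-- Conditional probability `q(V^j = v^j | V^{1:j-1} = v^{1:j-1})` (marginal over `X`). -/
noncomputable def condPm (N : ℕ) (q : (Fin N → ZMod 2) × (Fin N → ZMod 2) → ℝ)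
    (j : Fin N) (v : Fin N → ZMod 2) : ℝ :=
  (∑ x, prefProbLe N q j v x) / (∑ x, prefProb N q j v x)

section Helpers
variable {Ω α β : Type*} [Fintype Ω] [Fintype α] [Fintype β] [DecidableEq α] [DecidableEq β]

omit [Fintype α] in
lemma le_distOf (μ : Ω → ℝ) (hμ : ∀ ω, 0 ≤ μ ω) (h : Ω → α) (ω : Ω) :
    μ ω ≤ distOf μ h (h ω) := by
  have := Finset.single_le_sum (f := fun ω' => if h ω' = h ω then μ ω' else 0)
    (fun i _ => by split <;> simp [hμ i]) (Finset.mem_univ ω)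
  simpa [distOf] using this

lemma sum_distOf_mul (μ : Ω → ℝ) (h : Ω → α) (F : α → ℝ) :
    ∑ c, distOf μ h c * F c = ∑ ω, μ ω * F (h ω) := by
  simp only [distOf, Finset.sum_mul]
  rw [Finset.sum_comm]
  refine Finset.sum_congr rfl fun ω _ => ?_
  simp only [ite_mul, zero_mul]
  rw [Finset.sum_ite_eq]
  simp

lemma Hrv_eq (μ : Ω → ℝ) (h : Ω → α) :
    Hrv μ h = -∑ ω, μ ω * Real.logb 2 (distOf μ h (h ω)) := by
  rw [Hrv, ent, sum_distOf_mul μ h (fun c => Real.logb 2 (distOf μ h c))]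

lemma condH_eq (μ : Ω → ℝ) (hμ : ∀ ω, 0 ≤ μ ω) (f : Ω → α) (g : Ω → β) :
    condH μ f g = -∑ ω, μ ω * Real.logb 2
      (distOf μ (fun ω => (f ω, g ω)) (f ω, g ω) / distOf μ g (g ω)) := by
  rw [condH, Hrv_eq, Hrv_eq]
  rw [sub_neg_eq_add, neg_add_eq_sub, ← neg_sub, ← Finset.sum_sub_distrib, neg_inj]
  refine Finset.sum_congr rfl fun ω _ => ?_
  rcases eq_or_lt_of_le (hμ ω) with h0 | h0
  · simp [← h0]
  · have hJ : 0 < distOf μ (fun ω => (f ω, g ω)) (f ω, g ω) :=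
      lt_of_lt_of_le h0 (le_distOf μ hμ _ ω)
    have hG : 0 < distOf μ g (g ω) := lt_of_lt_of_le h0 (le_distOf μ hμ _ ω)
    rw [Real.logb_div hJ.ne' hG.ne']
    ring
end Helpers

section Pref
variable {N : ℕ} (p : (Fin N → ZMod 2) × (Fin N → ZMod 2) → ℝ) (j : Fin N)

lemma pre_eq_iff (w v : Fin N → ZMod 2) :
    ((fun i : {i : Fin N // i < j} => w i.1) = (fun i : {i : Fin N // i < j} => v i.1))
      ↔ ∀ i : Fin N, i < j → w i = v i := by
  constructor
  · intro h i hi; exact congrFun h ⟨i, hi⟩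
  · intro h; funext i; exact h i.1 i.2

lemma preLe_eq_iff (w v : Fin N → ZMod 2) :
    (w j = v j ∧ (fun i : {i : Fin N // i < j} => w i.1) = (fun i : {i : Fin N // i < j} => v i.1))
      ↔ ∀ i : Fin N, i ≤ j → w i = v i := by
  rw [pre_eq_iff]
  constructor
  · rintro ⟨h1, h2⟩ i hi
    rcases lt_or_eq_of_le hi with h | h
    · exact h2 i h
    · cases h; exact h1
  · intro h; exact ⟨h j le_rfl, fun i hi => h i hi.le⟩

lemma distOf_g (v x : Fin N → ZMod 2) :
    distOf p (fun ω => ((fun i : {i : Fin N // i < j} => ω.1 i.1), ω.2))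
      ((fun i : {i : Fin N // i < j} => v i.1), x) = prefProb N p j v x := by
  rw [distOf, prefProb, Fintype.sum_prod_type]
  refine Finset.sum_congr rfl fun w _ => ?_
  simp only [Prod.mk.injEq]
  by_cases hA : (fun i : {i : Fin N // i < j} => w i.1) = fun i => v i.1
  · rw [if_pos ((pre_eq_iff j w v).mp hA)]
    simp [hA, Finset.sum_ite_eq']
  · rw [if_neg (fun h => hA ((pre_eq_iff j w v).mpr h))]
    simp [hA]

lemma distOf_fg (v x : Fin N → ZMod 2) :
    distOf p (fun ω => (ω.1 j, (fun i : {i : Fin N // i < j} => ω.1 i.1), ω.2))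
      (v j, (fun i : {i : Fin N // i < j} => v i.1), x) = prefProbLe N p j v x := by
  rw [distOf, prefProbLe, Fintype.sum_prod_type]
  refine Finset.sum_congr rfl fun w _ => ?_
  simp only [Prod.mk.injEq]
  by_cases hA : w j = v j ∧ (fun i : {i : Fin N // i < j} => w i.1) = fun i => v i.1
  · rw [if_pos ((preLe_eq_iff j w v).mp hA)]
    simp [hA.1, hA.2, Finset.sum_ite_eq', and_assoc]
  · rw [if_neg (fun h => hA ((preLe_eq_iff j w v).mpr h))]
    have : ∀ x_1, ¬(w j = v j ∧ ((fun i : {i : Fin N // i < j} => w i.1) = fun i => v i.1) ∧ x_1 = x) := by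
      intro x1 ⟨h1, h2, h3⟩; exact hA ⟨h1, h2⟩
    simp [this]

lemma distOf_gm (v : Fin N → ZMod 2) :
    distOf p (fun ω => (fun i : {i : Fin N // i < j} => ω.1 i.1))
      (fun i : {i : Fin N // i < j} => v i.1) = ∑ x, prefProb N p j v x := by
  rw [distOf, Fintype.sum_prod_type, Finset.sum_comm]
  refine Finset.sum_congr rfl fun x _ => ?_
  rw [prefProb]
  refine Finset.sum_congr rfl fun w _ => ?_
  by_cases hA : (fun i : {i : Fin N // i < j} => w i.1) = fun i => v i.1
  · rw [if_pos hA, if_pos ((pre_eq_iff j w v).mp hA)]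
  · rw [if_neg hA, if_neg (fun h => hA ((pre_eq_iff j w v).mpr h))]

lemma distOf_fgm (v : Fin N → ZMod 2) :
    distOf p (fun ω => (ω.1 j, fun i : {i : Fin N // i < j} => ω.1 i.1))
      (v j, fun i : {i : Fin N // i < j} => v i.1) = ∑ x, prefProbLe N p j v x := by
  rw [distOf, Fintype.sum_prod_type, Finset.sum_comm]
  refine Finset.sum_congr rfl fun x _ => ?_
  rw [prefProbLe]
  refine Finset.sum_congr rfl fun w _ => ?_
  simp only [Prod.mk.injEq]
  by_cases hA : w j = v j ∧ (fun i : {i : Fin N // i < j} => w i.1) = fun i => v i.1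
  · rw [if_pos hA, if_pos ((preLe_eq_iff j w v).mp hA)]
  · rw [if_neg hA, if_neg (fun h => hA ((preLe_eq_iff j w v).mpr h))]

lemma prefProb_nonneg (hp0 : ∀ ω, 0 ≤ p ω) (v x : Fin N → ZMod 2) :
    0 ≤ prefProb N p j v x :=
  Finset.sum_nonneg fun w _ => by split <;> simp [hp0]

lemma prefProbLe_nonneg (hp0 : ∀ ω, 0 ≤ p ω) (v x : Fin N → ZMod 2) :
    0 ≤ prefProbLe N p j v x :=
  Finset.sum_nonneg fun w _ => by split <;> simp [hp0]

lemma le_prefProbLe (hp0 : ∀ ω, 0 ≤ p ω) (v x : Fin N → ZMod 2) :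
    p (v, x) ≤ prefProbLe N p j v x := by
  have := Finset.single_le_sum
    (f := fun w => if ∀ i : Fin N, i ≤ j → w i = v i then p (w, x) else 0)
    (fun w _ => by split <;> simp [hp0]) (Finset.mem_univ v)
  simpa [prefProbLe] using this

lemma prefProbLe_le_prefProb (hp0 : ∀ ω, 0 ≤ p ω) (v x : Fin N → ZMod 2) :
    prefProbLe N p j v x ≤ prefProb N p j v x := by
  refine Finset.sum_le_sum fun w _ => ?_
  by_cases h : ∀ i : Fin N, i ≤ j → w i = v i
  · rw [if_pos h, if_pos fun i hi => h i hi.le]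
  · rw [if_neg h]; split <;> simp [hp0]

lemma condP_pos (hp0 : ∀ ω, 0 ≤ p ω) (v x : Fin N → ZMod 2) (h : 0 < p (v, x)) :
    0 < condP N p j v x := by
  have h1 : 0 < prefProbLe N p j v x := h.trans_le (le_prefProbLe p j hp0 v x)
  have h2 : 0 < prefProb N p j v x := h1.trans_le (prefProbLe_le_prefProb p j hp0 v x)
  exact div_pos h1 h2

lemma condP_le_one (hp0 : ∀ ω, 0 ≤ p ω) (v x : Fin N → ZMod 2) (h : 0 < p (v, x)) :
    condP N p j v x ≤ 1 := by
  have h1 : 0 < prefProbLe N p j v x := h.trans_le (le_prefProbLe p j hp0 v x)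
  have h2 : 0 < prefProb N p j v x := h1.trans_le (prefProbLe_le_prefProb p j hp0 v x)
  rw [condP, div_le_one h2]
  exact prefProbLe_le_prefProb p j hp0 v x

lemma condPm_pos (hp0 : ∀ ω, 0 ≤ p ω) (v x : Fin N → ZMod 2) (h : 0 < p (v, x)) :
    0 < condPm N p j v := by
  have h1 : 0 < ∑ y, prefProbLe N p j v y := by
    refine Finset.sum_pos' (fun y _ => prefProbLe_nonneg p j hp0 v y) ⟨x, Finset.mem_univ x, ?_⟩
    exact h.trans_le (le_prefProbLe p j hp0 v x)
  have h2 : 0 < ∑ y, prefProb N p j v y :=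
    h1.trans_le (Finset.sum_le_sum fun y _ => prefProbLe_le_prefProb p j hp0 v y)
  exact div_pos h1 h2

lemma I1 (hp0 : ∀ ω, 0 ≤ p ω) :
    -∑ ω, p ω * Real.logb 2 (condP N p j ω.1 ω.2)
      = condH p (fun ω => ω.1 j) (fun ω => ((fun i : {i : Fin N // i < j} => ω.1 i.1), ω.2)) := by
  rw [condH_eq p hp0, neg_inj]
  refine Finset.sum_congr rfl fun ω _ => ?_
  rw [condP, ← distOf_fg p j ω.1 ω.2, ← distOf_g p j ω.1 ω.2]

lemma I2 (hp0 : ∀ ω, 0 ≤ p ω) :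
    -∑ ω, p ω * Real.logb 2 (condPm N p j ω.1)
      = condH p (fun ω => ω.1 j) (fun ω => fun i : {i : Fin N // i < j} => ω.1 i.1) := by
  rw [condH_eq p hp0, neg_inj]
  refine Finset.sum_congr rfl fun ω _ => ?_
  rw [condPm, ← distOf_fgm p j ω.1, ← distOf_gm p j ω.1]

lemma chain_p (hp0 : ∀ ω, 0 ≤ p ω) (v x : Fin N → ZMod 2) (h : 0 < p (v, x)) :
    p (v, x) = (∑ w, p (w, x)) * ∏ j, condP N p j v x := by
  set G : ℕ → ℝ := fun k => ∑ w, if ∀ i : Fin N, (i : ℕ) < k → w i = v i then p (w, x) else 0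
    with hG
  have hmono : ∀ k l : ℕ, k ≤ l → G l ≤ G k := by
    intro k l hkl
    refine Finset.sum_le_sum fun w _ => ?_
    by_cases hc : ∀ i : Fin N, (i : ℕ) < l → w i = v i
    · rw [if_pos hc, if_pos fun i hi => hc i (hi.trans_le hkl)]
    · rw [if_neg hc]; split <;> simp [hp0]
  have hGN : G N = p (v, x) := by
    have : ∀ w : Fin N → ZMod 2, (∀ i : Fin N, (i : ℕ) < N → w i = v i) ↔ w = v := by
      intro w
      constructor
      · intro hc; funext i; exact hc i i.2
      · rintro rfl i _; rfl
    rw [hG]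
    simp only [this]
    rw [Finset.sum_ite_eq' Finset.univ v fun w => p (w, x)]
    simp
  have hG0 : G 0 = ∑ w, p (w, x) := by
    rw [hG]; simp
  have hpos : ∀ k, 0 < G k := by
    intro k
    rcases le_or_gt k N with hk | hk
    · exact lt_of_lt_of_le (hGN ▸ h) (hmono k N hk)
    · calc (0:ℝ) < p (v, x) := h
        _ = G N := hGN.symm
        _ ≤ G k := by
          refine Finset.sum_le_sum fun w _ => ?_
          by_cases hc : ∀ i : Fin N, (i : ℕ) < N → w i = v i
          · rw [if_pos hc, if_pos fun i _ => hc i i.2]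
          · rw [if_neg hc]; split <;> simp [hp0]
  have hcond : ∀ j : Fin N, condP N p j v x = G ((j : ℕ) + 1) / G (j : ℕ) := by
    intro j
    rw [condP]
    congr 1
    · rw [prefProbLe, hG]
      refine Finset.sum_congr rfl fun w _ => ?_
      congr 1
      simp only [eq_iff_iff]
      constructor
      · intro hc i hi; exact hc i (Fin.le_def.mpr (Nat.lt_succ_iff.mp hi))
      · intro hc i hi; exact hc i (Nat.lt_succ_iff.mpr (Fin.le_def.mp hi))
  have htel : ∀ n : ℕ, ∏ k ∈ Finset.range n, (G (k + 1) / G k) = G n / G 0 := by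
    intro n
    induction n with
    | zero => simp [div_self (hpos 0).ne']
    | succ n ih =>
      rw [Finset.prod_range_succ, ih]
      rw [div_mul_div_comm, mul_comm (G n)]
      exact mul_div_mul_right _ _ (hpos n).ne'
  have hprod : ∏ j, condP N p j v x = G N / G 0 := by
    rw [Finset.prod_congr rfl fun j _ => hcond j, ← htel N]
    exact Fin.prod_univ_eq_prod_range (fun k => G (k + 1) / G k) N
  rw [hprod, ← hG0, mul_comm, div_mul_cancel₀ _ (hpos 0).ne', hGN]

end Pref


lemma logb_prod {ι : Type*} (s : Finset ι) (f : ι → ℝ) (hf : ∀ i ∈ s, f i ≠ 0) :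
    Real.logb 2 (∏ i ∈ s, f i) = ∑ i ∈ s, Real.logb 2 (f i) := by
  simp only [Real.logb, Real.log_prod hf, Finset.sum_div]


/-- chain rule for divergence applied to sequential sampling:
if `p̃` has the same `X`-marginal as `p`, its conditionals coincide with those of `p` on `S`,
are the `X`-free conditionals of `p` on `T`, and are uniform on `R`, and moreover
`1 − H_p(V^j|V^{1:j-1} X) ≤ δ` on `R` and `H_p(V^j|V^{1:j-1}) ≤ δ` on `T`, then
`D(p ‖ p̃) ≤ N δ`. -/
theorem divergence_of_sequential_sampling (N : ℕ) (δ : ℝ) (hδ : 0 < δ)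
    (p p' : (Fin N → ZMod 2) × (Fin N → ZMod 2) → ℝ)
    (hp : IsPMF p) (hp' : IsPMF p')
    (hmarg : ∀ x, ∑ v, p (v, x) = ∑ v, p' (v, x))
    (R S T : Finset (Fin N))
    (hRS : Disjoint R S) (hRT : Disjoint R T) (hST : Disjoint S T)
    (hcover : R ∪ S ∪ T = Finset.univ)
    (hfact : ∀ v x, p' (v, x) = (∑ w, p' (w, x)) * ∏ j, condP N p' j v x)
    (hS : ∀ j ∈ S, ∀ v x, condP N p' j v x = condP N p j v x)
    (hT : ∀ j ∈ T, ∀ v x, condP N p' j v x = condPm N p j v)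
    (hR : ∀ j ∈ R, ∀ v x, condP N p' j v x = 1 / 2)
    (hRent : ∀ j ∈ R, 1 - condH p (fun ω => ω.1 j)
        (fun ω => ((fun i : {i : Fin N // i < j} => ω.1 i.1), ω.2)) ≤ δ)
    (hTent : ∀ j ∈ T, condH p (fun ω => ω.1 j)
        (fun ω => fun i : {i : Fin N // i < j} => ω.1 i.1) ≤ δ) :
    KL p p' ≤ N * δ := by
  classical
  obtain ⟨hp0, hp1⟩ := hp
  have hmem : ∀ j : Fin N, j ∈ R ∨ j ∈ S ∨ j ∈ T := by
    intro j
    have : j ∈ R ∪ S ∪ T := hcover ▸ Finset.mem_univ j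
    simpa [Finset.mem_union, or_assoc] using this
  have hpos' : ∀ (j : Fin N) (v x : Fin N → ZMod 2), 0 < p (v, x) → 0 < condP N p' j v x := by
    intro j v x h
    rcases hmem j with hj | hj | hj
    · rw [hR j hj]; norm_num
    · rw [hS j hj]; exact condP_pos p j hp0 v x h
    · rw [hT j hj]; exact condPm_pos p j hp0 v x h
  set D : Fin N → ℝ := fun j => ∑ ω, p ω * Real.logb 2
    (condP N p j ω.1 ω.2 / condP N p' j ω.1 ω.2) with hD
  have hKL : KL p p' = ∑ j, D j := by
    rw [KL, Finset.sum_comm]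
    refine Finset.sum_congr rfl fun ω _ => ?_
    rcases (hp0 ω).eq_or_lt with h0 | h0
    · simp [← h0]
    · have hM : (0:ℝ) < ∑ w, p (w, ω.2) := by
        refine lt_of_lt_of_le h0 ?_
        refine Finset.single_le_sum (f := fun w => p (w, ω.2)) (fun w _ => hp0 _)
          (Finset.mem_univ ω.1)
      have hratpos : ∀ j : Fin N, 0 < condP N p j ω.1 ω.2 / condP N p' j ω.1 ω.2 :=
        fun j => div_pos (condP_pos p j hp0 ω.1 ω.2 h0) (hpos' j ω.1 ω.2 h0)
      have heq : p ω / p' ω = ∏ j, condP N p j ω.1 ω.2 / condP N p' j ω.1 ω.2 := by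
        have e1 : p ω = p (ω.1, ω.2) := rfl
        have e2 : p' ω = p' (ω.1, ω.2) := rfl
        rw [e1, e2, chain_p p hp0 ω.1 ω.2 h0, hfact ω.1 ω.2, ← hmarg ω.2,
          mul_div_mul_left _ _ hM.ne', ← Finset.prod_div_distrib]
      rw [heq, logb_prod Finset.univ _ (fun j _ => (hratpos j).ne'), Finset.mul_sum]
  have hDS : ∀ j ∈ S, D j = 0 := by
    intro j hj
    refine Finset.sum_eq_zero fun ω _ => ?_
    rcases (hp0 ω).eq_or_lt with h0 | h0
    · simp [← h0]
    · have hc := condP_pos p j hp0 ω.1 ω.2 h0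
      rw [hS j hj, div_self hc.ne', Real.logb_one, mul_zero]
  have hDR : ∀ j ∈ R, D j ≤ δ := by
    intro j hj
    have hpt : ∀ ω, p ω * Real.logb 2 (condP N p j ω.1 ω.2 / condP N p' j ω.1 ω.2)
        = p ω + p ω * Real.logb 2 (condP N p j ω.1 ω.2) := by
      intro ω
      rcases (hp0 ω).eq_or_lt with h0 | h0
      · simp [← h0]
      · have hc := condP_pos p j hp0 ω.1 ω.2 h0
        rw [hR j hj, div_div_eq_mul_div, div_one, Real.logb_mul hc.ne' two_ne_zero,
          Real.logb_self_eq_one (by norm_num)]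
        ring
    have hsum : D j = 1 + ∑ ω, p ω * Real.logb 2 (condP N p j ω.1 ω.2) := by
      rw [hD]
      dsimp only
      rw [Finset.sum_congr rfl fun ω _ => hpt ω, Finset.sum_add_distrib, hp1]
    have hI := I1 p j hp0
    have := hRent j hj
    rw [hsum]
    linarith
  have hDT : ∀ j ∈ T, D j ≤ δ := by
    intro j hj
    have hpt : ∀ ω, p ω * Real.logb 2 (condP N p j ω.1 ω.2 / condP N p' j ω.1 ω.2)
        ≤ -(p ω * Real.logb 2 (condPm N p j ω.1)) := by
      intro ω
      rcases (hp0 ω).eq_or_lt with h0 | h0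
      · simp [← h0]
      · have hc := condP_pos p j hp0 ω.1 ω.2 h0
        have hcm := condPm_pos p j hp0 ω.1 ω.2 h0
        have h1 := condP_le_one p j hp0 ω.1 ω.2 h0
        have hlog : Real.logb 2 (condP N p j ω.1 ω.2) ≤ 0 :=
          Real.logb_nonpos (by norm_num) hc.le h1
        have hnp : p ω * Real.logb 2 (condP N p j ω.1 ω.2) ≤ 0 :=
          mul_nonpos_of_nonneg_of_nonpos h0.le hlog
        rw [hT j hj, Real.logb_div hc.ne' hcm.ne', mul_sub]
        linarith
    have hI := I2 p j hp0
    have := hTent j hj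
    calc D j ≤ ∑ ω, -(p ω * Real.logb 2 (condPm N p j ω.1)) :=
          Finset.sum_le_sum fun ω _ => hpt ω
      _ = -∑ ω, p ω * Real.logb 2 (condPm N p j ω.1) := by rw [Finset.sum_neg_distrib]
      _ ≤ δ := by rw [hI]; exact this
  have hdisj2 : Disjoint (R ∪ S) T := Finset.disjoint_union_left.mpr ⟨hRT, hST⟩
  have hcards : R.card + S.card + T.card = N := by
    have : ((R ∪ S) ∪ T).card = (R ∪ S).card + T.card := Finset.card_union_of_disjoint hdisj2
    rw [hcover] at this
    rw [Finset.card_union_of_disjoint hRS] at this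
    simpa [Finset.card_univ] using this.symm
  rw [hKL, ← hcover, Finset.sum_union hdisj2, Finset.sum_union hRS]
  have hRsum : ∑ j ∈ R, D j ≤ R.card * δ := by
    calc ∑ j ∈ R, D j ≤ ∑ _j ∈ R, δ := Finset.sum_le_sum fun j hj => hDR j hj
      _ = R.card * δ := by rw [Finset.sum_const, nsmul_eq_mul]
  have hSsum : ∑ j ∈ S, D j = 0 := Finset.sum_eq_zero hDS
  have hTsum : ∑ j ∈ T, D j ≤ T.card * δ := by
    calc ∑ j ∈ T, D j ≤ ∑ _j ∈ T, δ := Finset.sum_le_sum fun j hj => hDT j hj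
      _ = T.card * δ := by rw [Finset.sum_const, nsmul_eq_mul]
  have hcard_le : (R.card : ℝ) + T.card ≤ N := by
    have : R.card + T.card ≤ N := by omega
    exact_mod_cast this
  have : (R.card : ℝ) * δ + T.card * δ ≤ N * δ := by
    rw [← add_mul]
    exact mul_le_mul_of_nonneg_right hcard_le hδ.le
  linarith
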